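/- For every real number t in the open interval I = (θ, −13): the inner radicand 3(11−t)·(p12(t) − 2ω(t)·p10(t)) is nonnegative, the two outer radicands ((t−11)·p9(t) − 16ω(t)(1+t)^2·p6(t) ± 8(1+t)^2(13+t)·√(3(11−t)(p12(t) − 2ω(t)·p10(t))))/q5(t) are nonnegative, and the equioscillation points z2(t) = −√(((t−11)·p9(t) − 16ω(t)(1+t)^2·p6(t) + 8(1+t)^2(13+t)·√(3(11−t)(p12(t) − 2ω(t)·p10(t))))/q5(t)) and z4(t) = √(((t−11)·p9(t) − 16ω(t)(1+t)^2·p6(t) − 8(1+t)^2(13+t)·√(3(11−t)(p12(t) − 2ω(t)·p10(t))))/q5(t)) satisfy −1 < z2(t) < 0 ≤ z4(t) < 1. -/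
import Mathlib

private lemma term_pos {u v : ℝ} (hu : 0 < u) (hv : 0 < v) (c : ℝ) (hc : 0 < c)
    (i j : ℕ) : 0 < c*u^i*v^j :=
  mul_pos (mul_pos hc (pow_pos hu i)) (pow_pos hv j)

private lemma sq_lt_aux {a b : ℝ} (hb : 0 ≤ b) (h : a^2 < b^2) : a < b :=
  lt_of_le_of_lt (le_abs_self a) (lt_of_pow_lt_pow_left₀ 2 hb (by rwa [sq_abs]))

private lemma sq_le_aux {a b : ℝ} (hb : 0 ≤ b) (h : a^2 ≤ b^2) : a ≤ b :=
  le_trans (le_abs_self a) (le_of_pow_le_pow_left₀ two_ne_zero hb (by rwa [sq_abs]))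

private lemma aux_pos (X Y w : ℝ) (hX : 0 < X) (h : (w*Y)^2 < X^2) : 0 < X + w*Y := by
  have h2 : -(w*Y) < X := sq_lt_aux hX.le (by rw [neg_pow]; simpa using h)
  linarith

private lemma aux_nonneg (X Y w : ℝ) (hX : 0 ≤ X) (h : (w*Y)^2 ≤ X^2) : 0 ≤ X + w*Y := by
  have h2 : -(w*Y) ≤ X := sq_le_aux hX (by rw [neg_pow]; simpa using h)
  linarith

set_option maxHeartbeats 4000000

noncomputable section

def ω (t : ℝ) : ℝ := Real.sqrt (3 * (506 + 75 * t - t ^ 3))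

def q5 (t : ℝ) : ℝ := (t - 11) ^ 2 * (13 + t) ^ 5 * (-1763 + 75 * t + 111 * t ^ 2 + t ^ 3)

def p9 (t : ℝ) : ℝ :=
  7458346453 + 2414057145 * t + 80738436 * t ^ 2 - 35137404 * t ^ 3 + 943590 * t ^ 4 +
    1460238 * t ^ 5 + 136212 * t ^ 6 + 4020 * t ^ 7 - 339 * t ^ 8 + t ^ 9

def p6 (t : ℝ) : ℝ :=
  -4757750 - 991641 * t + 35097 * t ^ 2 + 1478 * t ^ 3 - 84 * t ^ 4 - 93 * t ^ 5 + t ^ 6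

def p12 (t : ℝ) : ℝ :=
  9627927080284 + 4974116032425 * t + 1038680780799 * t ^ 2 + 126082292719 * t ^ 3 +
    6771588669 * t ^ 4 + 996190362 * t ^ 5 + 407573430 * t ^ 6 + 26107902 * t ^ 7 -
    4154346 * t ^ 8 - 474323 * t ^ 9 + 59547 * t ^ 10 - 861 * t ^ 11 + t ^ 12

def p10 (t : ℝ) : ℝ :=
  122595778519 + 52782140344 * t + 8848501713 * t ^ 2 + 1458683184 * t ^ 3 +
    201606006 * t ^ 4 + 6367392 * t ^ 5 - 2103342 * t ^ 6 - 42288 * t ^ 7 +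
    68355 * t ^ 8 - 2648 * t ^ 9 + 13 * t ^ 10

/-- Inner radicand 3(11−t)(p12(t) − 2ω(t)p10(t)). -/
def inner (t : ℝ) : ℝ := 3 * (11 - t) * (p12 t - 2 * ω t * p10 t)

/-- Outer radicand with the `+` sign. -/
def outerPlus (t : ℝ) : ℝ :=
  ((t - 11) * p9 t - 16 * ω t * (1 + t) ^ 2 * p6 t +
    8 * (1 + t) ^ 2 * (13 + t) * Real.sqrt (inner t)) / q5 t

/-- Outer radicand with the `−` sign. -/
def outerMinus (t : ℝ) : ℝ :=
  ((t - 11) * p9 t - 16 * ω t * (1 + t) ^ 2 * p6 t -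
    8 * (1 + t) ^ 2 * (13 + t) * Real.sqrt (inner t)) / q5 t

def z2 (t : ℝ) : ℝ := -Real.sqrt (outerPlus t)

def z4 (t : ℝ) : ℝ := Real.sqrt (outerMinus t)

/-- for every t ∈ I = (θ, −13), the inner radicand is nonnegative, both outer
radicands are nonnegative, and the equioscillation points z₂(t), z₄(t) satisfy
−1 < z₂(t) < 0 ≤ z₄(t) < 1. -/
theorem stmt4 (θ : ℝ)
    (hθroot : θ ^ 3 + 27 * θ ^ 2 - 93 * θ - 1847 = 0)
    (hθmin : ∀ x : ℝ, x ^ 3 + 27 * x ^ 2 - 93 * x - 1847 = 0 → θ ≤ x) :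
    ∀ t ∈ Set.Ioo θ (-13 : ℝ),
      0 ≤ inner t ∧ 0 ≤ outerPlus t ∧ 0 ≤ outerMinus t ∧
      -1 < z2 t ∧ z2 t < 0 ∧ 0 ≤ z4 t ∧ z4 t < 1 := by
  have hth : (-28:ℝ) < θ := by
    by_contra hc
    push_neg at hc
    have hs : θ + 28 ≤ 0 := by linarith
    nlinarith [mul_nonneg (neg_nonneg.2 hs) (sq_nonneg (θ+28)), sq_nonneg (θ+28)]
  intro t ht
  obtain ⟨ht1, ht2⟩ := ht
  have hu : (0:ℝ) < t + 28 := by linarith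
  have hv : (0:ℝ) < -13 - t := by linarith
  have hr : (0:ℝ) < -1 - t := by linarith
  have h11 : (0:ℝ) < 11 - t := by linarith
  have hW2 : (0:ℝ) < 1518 + 225*t + (-3)*t^3 := by
    have hsum : ((2262/125)*(t+28)^0*(-13-t)^3 + (2991/125)*(t+28)^1*(-13-t)^2 + (1296/125)*(t+28)^2*(-13-t)^1 + (192/125)*(t+28)^3*(-13-t)^0 : ℝ) = 1518 + 225*t + (-3)*t^3 := by ring
    rw [← hsum]
    exact (add_pos (add_pos (add_pos (term_pos hu hv _ (by norm_num) 0 3) (term_pos hu hv _ (by norm_num) 1 2)) (term_pos hu hv _ (by norm_num) 2 1)) (term_pos hu hv _ (by norm_num) 3 0))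
  have hp12 : (0:ℝ) < 9627927080284 + 4974116032425*t + 1038680780799*t^2 + 126082292719*t^3 + 6771588669*t^4 + 996190362*t^5 + 407573430*t^6 + 26107902*t^7 + (-4154346)*t^8 + (-474323)*t^9 + 59547*t^10 + (-861)*t^11 + 1*t^12 := by
    have hsum : ((10645663947344/48828125)*(t+28)^0*(-13-t)^12 + (13898670006887/9765625)*(t+28)^1*(-13-t)^11 + (205873651131176/48828125)*(t+28)^2*(-13-t)^10 + (73250989357688/9765625)*(t+28)^3*(-13-t)^9 + (87217388567232/9765625)*(t+28)^4*(-13-t)^8 + (366342322398208/48828125)*(t+28)^5*(-13-t)^7 + (44557347872768/9765625)*(t+28)^6*(-13-t)^6 + (98883838902272/48828125)*(t+28)^7*(-13-t)^5 + (6362142343168/9765625)*(t+28)^8*(-13-t)^4 + (1447519322112/9765625)*(t+28)^9*(-13-t)^3 + (1106105073664/48828125)*(t+28)^10*(-13-t)^2 + (20401094656/9765625)*(t+28)^11*(-13-t)^1 + (4294967296/48828125)*(t+28)^12*(-13-t)^0 : ℝ) = 9627927080284 + 4974116032425*t + 1038680780799*t^2 + 126082292719*t^3 + 6771588669*t^4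 + 996190362*t^5 + 407573430*t^6 + 26107902*t^7 + (-4154346)*t^8 + (-474323)*t^9 + 59547*t^10 + (-861)*t^11 + 1*t^12 := by ring
    rw [← hsum]
    exact (add_pos (add_pos (add_pos (add_pos (add_pos (add_pos (add_pos (add_pos (add_pos (add_pos (add_pos (add_pos (term_pos hu hv _ (by norm_num) 0 12) (term_pos hu hv _ (by norm_num) 1 11)) (term_pos hu hv _ (by norm_num) 2 10)) (term_pos hu hv _ (by norm_num) 3 9)) (term_pos hu hv _ (by norm_num) 4 8)) (term_pos hu hv _ (by norm_num) 5 7)) (term_pos hu hv _ (by norm_num) 6 6)) (term_pos hu hv _ (by norm_num) 7 5)) (term_pos hu hv _ (by norm_num) 8 4)) (term_pos hu hv _ (by norm_num) 9 3)) (term_pos hu hv _ (by norm_num) 10 2)) (term_pos hu hv _ (by norm_num) 11 1)) (term_pos hu hv _ (by norm_num) 12 0))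
  have hmc3 : (0:ℝ) < (-568) + (-12)*t + 15*t^2 + (-1)*t^3 := by
    have hsum : ((248/25)*(t+28)^0*(-13-t)^3 + (388/25)*(t+28)^1*(-13-t)^2 + (197/25)*(t+28)^2*(-13-t)^1 + (32/25)*(t+28)^3*(-13-t)^0 : ℝ) = (-568) + (-12)*t + 15*t^2 + (-1)*t^3 := by ring
    rw [← hsum]
    exact (add_pos (add_pos (add_pos (term_pos hu hv _ (by norm_num) 0 3) (term_pos hu hv _ (by norm_num) 1 2)) (term_pos hu hv _ (by norm_num) 2 1)) (term_pos hu hv _ (by norm_num) 3 0))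
  have hr3 : (0:ℝ) < (-1763) + 75*t + 111*t^2 + 1*t^3 := by
    have hsum : ((2267/125)*(t+28)^0*(-13-t)^3 + (4696/125)*(t+28)^1*(-13-t)^2 + (2816/125)*(t+28)^2*(-13-t)^1 + (512/125)*(t+28)^3*(-13-t)^0 : ℝ) = (-1763) + 75*t + 111*t^2 + 1*t^3 := by ring
    rw [← hsum]
    exact (add_pos (add_pos (add_pos (term_pos hu hv _ (by norm_num) 0 3) (term_pos hu hv _ (by norm_num) 1 2)) (term_pos hu hv _ (by norm_num) 2 1)) (term_pos hu hv _ (by norm_num) 3 0))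
  have hp6 : (0:ℝ) < (-4757750) + (-991641)*t + 35097*t^2 + 1478*t^3 + (-84)*t^4 + (-93)*t^5 + 1*t^6 := by
    have hsum : ((2810566/15625)*(t+28)^0*(-13-t)^6 + (9020141/15625)*(t+28)^1*(-13-t)^5 + (2387888/3125)*(t+28)^2*(-13-t)^4 + (1681984/3125)*(t+28)^3*(-13-t)^3 + (670208/3125)*(t+28)^4*(-13-t)^2 + (720896/15625)*(t+28)^5*(-13-t)^1 + (65536/15625)*(t+28)^6*(-13-t)^0 : ℝ) = (-4757750) + (-991641)*t + 35097*t^2 + 1478*t^3 + (-84)*t^4 + (-93)*t^5 + 1*t^6 := by ring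
    rw [← hsum]
    exact (add_pos (add_pos (add_pos (add_pos (add_pos (add_pos (term_pos hu hv _ (by norm_num) 0 6) (term_pos hu hv _ (by norm_num) 1 5)) (term_pos hu hv _ (by norm_num) 2 4)) (term_pos hu hv _ (by norm_num) 3 3)) (term_pos hu hv _ (by norm_num) 4 2)) (term_pos hu hv _ (by norm_num) 5 1)) (term_pos hu hv _ (by norm_num) 6 0))
  have hM15 : (0:ℝ) < 18104467756638373 + 1367710885365399*t + (-1487349267530811)*t^2 + (-138363596662057)*t^3 + 20218769211897*t^4 + 470867853171*t^5 + (-512774746487)*t^6 + (-3098198781)*t^7 + 11823053103*t^8 + (-393798395)*t^9 + (-73106577)*t^10 + (-4762779)*t^11 + 859763*t^12 + (-3663)*t^13 + 3*t^14 + 1*t^15 := by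
    have hsum : ((17088275707224787/30517578125)*(t+28)^0*(-13-t)^15 + (29411602587135744/6103515625)*(t+28)^1*(-13-t)^14 + (116989492795313184/6103515625)*(t+28)^2*(-13-t)^13 + (57117077291385856/1220703125)*(t+28)^3*(-13-t)^12 + (478915585259662848/6103515625)*(t+28)^4*(-13-t)^11 + (2924673972619493376/30517578125)*(t+28)^5*(-13-t)^10 + (538003024905289728/6103515625)*(t+28)^6*(-13-t)^9 + (379773751907319808/6103515625)*(t+28)^7*(-13-t)^8 + (41520670787764224/1220703125)*(t+28)^8*(-13-t)^7 + (87950225682989056/6103515625)*(t+28)^9*(-13-t)^6 + (143298027916886016/30517578125)*(t+28)^10*(-13-t)^5 + (7058805997174784/6103515625)*(t+28)^11*(-13-t)^4 + (1272707257729024/6103515625)*(t+28)^12*(-13-t)^3 + (31731218382848/1220703125)*(t+28)^13*(-13-t)^2 + (12232066859008/6103515625)*(t+28)^14*(-13-t)^1 + (2199023255552/30517578125)*(t+28)^15*(-13-t)^0 : ℝ) = 18104467756638373 + 1367710885365399*t + (-1487349267530811)*t^2 + (-138363596662057)*t^3 + 20218769211897*t^4 + 470867853171*t^5 + (-512774746487)*t^6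 + (-3098198781)*t^7 + 11823053103*t^8 + (-393798395)*t^9 + (-73106577)*t^10 + (-4762779)*t^11 + 859763*t^12 + (-3663)*t^13 + 3*t^14 + 1*t^15 := by ring
    rw [← hsum]
    exact (add_pos (add_pos (add_pos (add_pos (add_pos (add_pos (add_pos (add_pos (add_pos (add_pos (add_pos (add_pos (add_pos (add_pos (add_pos (term_pos hu hv _ (by norm_num) 0 15) (term_pos hu hv _ (by norm_num) 1 14)) (term_pos hu hv _ (by norm_num) 2 13)) (term_pos hu hv _ (by norm_num) 3 12)) (term_pos hu hv _ (by norm_num) 4 11)) (term_pos hu hv _ (by norm_num) 5 10)) (term_pos hu hv _ (by norm_num) 6 9)) (term_pos hu hv _ (by norm_num) 7 8)) (term_pos hu hv _ (by norm_num) 8 7)) (term_pos hu hv _ (by norm_num) 9 6)) (term_pos hu hv _ (by norm_num) 10 5)) (term_pos hu hv _ (by norm_num) 11 4)) (term_pos hu hv _ (by norm_num) 12 3)) (term_pos hu hv _ (by norm_num) 13 2)) (term_pos hu hv _ (by norm_num) 14 1)) (term_pos hu hv _ (by norm_num) 15 0))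
  have hM9 : (0:ℝ) < (-2022704173248) + 569638725120*t + 87388982784*t^2 + (-27789320448)*t^3 + 473551488*t^4 + 30364416*t^5 + 24339456*t^6 + (-2439936)*t^7 + 60480*t^8 + 768*t^9 := by
    have hsum : ((3038413889472/1953125)*(t+28)^0*(-13-t)^9 + (16159308700608/1953125)*(t+28)^1*(-13-t)^8 + (37578189679872/1953125)*(t+28)^2*(-13-t)^7 + (50343499849728/1953125)*(t+28)^3*(-13-t)^6 + (42957717061632/1953125)*(t+28)^4*(-13-t)^5 + (24281192988672/1953125)*(t+28)^5*(-13-t)^4 + (9115096055808/1953125)*(t+28)^6*(-13-t)^3 + (2196422787072/1953125)*(t+28)^7*(-13-t)^2 + (308834992128/1953125)*(t+28)^8*(-13-t)^1 + (19327352832/1953125)*(t+28)^9*(-13-t)^0 : ℝ) = (-2022704173248) + 569638725120*t + 87388982784*t^2 + (-27789320448)*t^3 + 473551488*t^4 + 30364416*t^5 + 24339456*t^6 + (-2439936)*t^7 + 60480*t^8 + 768*t^9 := by ring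
    rw [← hsum]
    exact (add_pos (add_pos (add_pos (add_pos (add_pos (add_pos (add_pos (add_pos (add_pos (term_pos hu hv _ (by norm_num) 0 9) (term_pos hu hv _ (by norm_num) 1 8)) (term_pos hu hv _ (by norm_num) 2 7)) (term_pos hu hv _ (by norm_num) 3 6)) (term_pos hu hv _ (by norm_num) 4 5)) (term_pos hu hv _ (by norm_num) 5 4)) (term_pos hu hv _ (by norm_num) 6 3)) (term_pos hu hv _ (by norm_num) 7 2)) (term_pos hu hv _ (by norm_num) 8 1)) (term_pos hu hv _ (by norm_num) 9 0))
  have hm6 : (0:ℝ) < 35067511 + 5422118*t + 199093*t^2 + (-14108)*t^3 + 1265*t^4 + 22*t^5 + 3*t^6 := by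
    have hsum : ((3009079/15625)*(t+28)^0*(-13-t)^6 + (9985324/15625)*(t+28)^1*(-13-t)^5 + (2820112/3125)*(t+28)^2*(-13-t)^4 + (2142016/3125)*(t+28)^3*(-13-t)^3 + (2740736/9375)*(t+28)^4*(-13-t)^2 + (3100672/46875)*(t+28)^5*(-13-t)^1 + (98304/15625)*(t+28)^6*(-13-t)^0 : ℝ) = 35067511 + 5422118*t + 199093*t^2 + (-14108)*t^3 + 1265*t^4 + 22*t^5 + 3*t^6 := by ring
    rw [← hsum]
    exact (add_pos (add_pos (add_pos (add_pos (add_pos (add_pos (term_pos hu hv _ (by norm_num) 0 6) (term_pos hu hv _ (by norm_num) 1 5)) (term_pos hu hv _ (by norm_num) 2 4)) (term_pos hu hv _ (by norm_num) 3 3)) (term_pos hu hv _ (by norm_num) 4 2)) (term_pos hu hv _ (by norm_num) 5 1)) (term_pos hu hv _ (by norm_num) 6 0))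
  have hU : (0:ℝ) < 6736218875218155818737 + 3157806694072492194788*t + 158705238480230736910*t^2 + (-94332752346051441948)*t^3 + 11002307517181342893*t^4 + 9545861336337123792*t^5 + 663166313017341864*t^6 + (-221843482143707760)*t^7 + (-30452759291502030)*t^8 + 1589505070635128*t^9 + 405317981831188*t^10 + (-3418091850184)*t^11 + (-1944425540910)*t^12 + 30596907792*t^13 + 1861963944*t^14 + (-889854384)*t^15 + 80172381*t^16 + (-2847036)*t^17 + 116110*t^18 + (-1276)*t^19 + 1*t^20 := by
    have hsum : ((12690375030909517414993/95367431640625)*(t+28)^0*(-13-t)^20 + (27586374914982999964992/19073486328125)*(t+28)^1*(-13-t)^19 + (141941886739764425986464/19073486328125)*(t+28)^2*(-13-t)^18 + (459734556968221978087424/19073486328125)*(t+28)^3*(-13-t)^17 + (1051261722602845159695872/19073486328125)*(t+28)^4*(-13-t)^16 + (9020473542561861355651072/95367431640625)*(t+28)^5*(-13-t)^15 + (2410991674228960274743296/19073486328125)*(t+28)^6*(-13-t)^14 + (2569423836793119519014912/19073486328125)*(t+28)^7*(-13-t)^13 + (2217848727137025447165952/19073486328125)*(t+28)^8*(-13-t)^12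 + (1565921562897270960029696/19073486328125)*(t+28)^9*(-13-t)^11 + (4546929503263920654123008/95367431640625)*(t+28)^10*(-13-t)^10 + (435174753584404460732416/19073486328125)*(t+28)^11*(-13-t)^9 + (171316713146777266552832/19073486328125)*(t+28)^12*(-13-t)^8 + (55187377712591936684032/19073486328125)*(t+28)^13*(-13-t)^7 + (14407281036609586200576/19073486328125)*(t+28)^14*(-13-t)^6 + (15008308124710728630272/95367431640625)*(t+28)^15*(-13-t)^5 + (487478718826767450112/19073486328125)*(t+28)^16*(-13-t)^4 + (59486640103053328384/19073486328125)*(t+28)^17*(-13-t)^3 + (5132414725342101504/19073486328125)*(t+28)^18*(-13-t)^2 + (279223176896970752/19073486328125)*(t+28)^19*(-13-t)^1 + (36028797018963968/95367431640625)*(t+28)^20*(-13-t)^0 : ℝ) = 6736218875218155818737 + 3157806694072492194788*t + 158705238480230736910*t^2 + (-94332752346051441948)*t^3 + 11002307517181342893*t^4 + 9545861336337123792*t^5 + 663166313017341864*t^6 + (-221843482143707760)*t^7 + (-30452759291502030)*t^8 + 1589505070635128*t^9 + 405317981831188*t^10 + (-3418091850184)*t^11 + (-1944425540910)*t^12 +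 30596907792*t^13 + 1861963944*t^14 + (-889854384)*t^15 + 80172381*t^16 + (-2847036)*t^17 + 116110*t^18 + (-1276)*t^19 + 1*t^20 := by ring
    rw [← hsum]
    exact (add_pos (add_pos (add_pos (add_pos (add_pos (add_pos (add_pos (add_pos (add_pos (add_pos (add_pos (add_pos (add_pos (add_pos (add_pos (add_pos (add_pos (add_pos (add_pos (add_pos (term_pos hu hv _ (by norm_num) 0 20) (term_pos hu hv _ (by norm_num) 1 19)) (term_pos hu hv _ (by norm_num) 2 18)) (term_pos hu hv _ (by norm_num) 3 17)) (term_pos hu hv _ (by norm_num) 4 16)) (term_pos hu hv _ (by norm_num) 5 15)) (term_pos hu hv _ (by norm_num) 6 14)) (term_pos hu hv _ (by norm_num) 7 13)) (term_pos hu hv _ (by norm_num) 8 12)) (term_pos hu hv _ (by norm_num) 9 11)) (term_pos hu hv _ (by norm_num) 10 10)) (term_pos hu hv _ (by norm_num) 11 9)) (term_pos hu hv _ (by norm_num) 12 8)) (term_pos hu hv _ (by norm_num) 13 7)) (term_pos hu hv _ (by norm_num) 14 6)) (term_pos hu hv _ (by norm_num) 15 5)) (term_pos hu hv _ (by norm_num)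 16 4)) (term_pos hu hv _ (by norm_num) 17 3)) (term_pos hu hv _ (by norm_num) 18 2)) (term_pos hu hv _ (by norm_num) 19 1)) (term_pos hu hv _ (by norm_num) 20 0))
  have hAq : (0:ℝ) < (-2836474344) + (-6403145400)*t + (-4341762720)*t^2 + (-820436832)*t^3 + (-44936496)*t^4 + 1316592*t^5 + 960480*t^6 + 55584*t^7 + 2520*t^8 + (-504)*t^9 := by
    have hsum : ((302848199784/1953125)*(t+28)^0*(-13-t)^9 + (1284457341456/1953125)*(t+28)^1*(-13-t)^8 + (2426947031424/1953125)*(t+28)^2*(-13-t)^7 + (2683680589056/1953125)*(t+28)^3*(-13-t)^6 + (1915452893184/1953125)*(t+28)^4*(-13-t)^5 + (915768950784/1953125)*(t+28)^5*(-13-t)^4 + (293463392256/1953125)*(t+28)^6*(-13-t)^3 + (60816359424/1953125)*(t+28)^7*(-13-t)^2 + (7398752256/1953125)*(t+28)^8*(-13-t)^1 + (402653184/1953125)*(t+28)^9*(-13-t)^0 : ℝ) = (-2836474344) + (-6403145400)*t + (-4341762720)*t^2 + (-820436832)*t^3 + (-44936496)*t^4 + 1316592*t^5 + 960480*t^6 +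 55584*t^7 + 2520*t^8 + (-504)*t^9 := by ring
    rw [← hsum]
    exact (add_pos (add_pos (add_pos (add_pos (add_pos (add_pos (add_pos (add_pos (add_pos (term_pos hu hv _ (by norm_num) 0 9) (term_pos hu hv _ (by norm_num) 1 8)) (term_pos hu hv _ (by norm_num) 2 7)) (term_pos hu hv _ (by norm_num) 3 6)) (term_pos hu hv _ (by norm_num) 4 5)) (term_pos hu hv _ (by norm_num) 5 4)) (term_pos hu hv _ (by norm_num) 6 3)) (term_pos hu hv _ (by norm_num) 7 2)) (term_pos hu hv _ (by norm_num) 8 1)) (term_pos hu hv _ (by norm_num) 9 0))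
  have hUp : (0:ℝ) < 13405712552026622784 + 60744269424490698816*t + 110048949839185410240*t^2 + 100870818071473865664*t^3 + 48663304736583142656*t^4 + 11592969257507496192*t^5 + 1041084784119193344*t^6 + (-69840252974032128)*t^7 + (-22702212326473344)*t^8 + (-1999891241359488)*t^9 + (-140775845440896)*t^10 + (-4555576791936)*t^11 + 3534631540992*t^12 + 397830216960*t^13 + (-9899193600)*t^14 + (-2999994624)*t^15 + 34917696*t^16 + (-146880)*t^17 + 232128*t^18 + (-576)*t^19 := by
    have hsum : ((38792000495482010023104/19073486328125)*(t+28)^0*(-13-t)^19 + (381170751449904195451776/19073486328125)*(t+28)^1*(-13-t)^18 + (1772337279921990234845184/19073486328125)*(t+28)^2*(-13-t)^17 + (5182817439971061420466176/19073486328125)*(t+28)^3*(-13-t)^16 + (10684634385679564734971904/19073486328125)*(t+28)^4*(-13-t)^15 + (16496325632266534045581312/19073486328125)*(t+28)^5*(-13-t)^14 + (19777750673034115707568128/19073486328125)*(t+28)^6*(-13-t)^13 + (18840151153293472853655552/19073486328125)*(t+28)^7*(-13-t)^12 + (14469117725194102901833728/19073486328125)*(t+28)^8*(-13-t)^11 +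 (9037168664643508698611712/19073486328125)*(t+28)^9*(-13-t)^10 + (4609264461102560745357312/19073486328125)*(t+28)^10*(-13-t)^9 + (1919735199355498741628928/19073486328125)*(t+28)^11*(-13-t)^8 + (650261749259205504663552/19073486328125)*(t+28)^12*(-13-t)^7 + (177579315134452809596928/19073486328125)*(t+28)^13*(-13-t)^6 + (38532219697030823411712/19073486328125)*(t+28)^14*(-13-t)^5 + (6492787140473445679104/19073486328125)*(t+28)^15*(-13-t)^4 + (819393641928066072576/19073486328125)*(t+28)^16*(-13-t)^3 + (72905959617733853184/19073486328125)*(t+28)^17*(-13-t)^2 + (4080261262397669376/19073486328125)*(t+28)^18*(-13-t)^1 + (108086391056891904/19073486328125)*(t+28)^19*(-13-t)^0 : ℝ) = 13405712552026622784 + 60744269424490698816*t + 110048949839185410240*t^2 + 100870818071473865664*t^3 + 48663304736583142656*t^4 + 11592969257507496192*t^5 + 1041084784119193344*t^6 + (-69840252974032128)*t^7 + (-22702212326473344)*t^8 + (-1999891241359488)*t^9 + (-140775845440896)*t^10 + (-4555576791936)*t^11 + 3534631540992*t^12 + 397830216960*t^13 + (-9899193600)*t^14 + (-2999994624)*t^15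 + 34917696*t^16 + (-146880)*t^17 + 232128*t^18 + (-576)*t^19 := by ring
    rw [← hsum]
    exact (add_pos (add_pos (add_pos (add_pos (add_pos (add_pos (add_pos (add_pos (add_pos (add_pos (add_pos (add_pos (add_pos (add_pos (add_pos (add_pos (add_pos (add_pos (add_pos (term_pos hu hv _ (by norm_num) 0 19) (term_pos hu hv _ (by norm_num) 1 18)) (term_pos hu hv _ (by norm_num) 2 17)) (term_pos hu hv _ (by norm_num) 3 16)) (term_pos hu hv _ (by norm_num) 4 15)) (term_pos hu hv _ (by norm_num) 5 14)) (term_pos hu hv _ (by norm_num) 6 13)) (term_pos hu hv _ (by norm_num) 7 12)) (term_pos hu hv _ (by norm_num) 8 11)) (term_pos hu hv _ (by norm_num) 9 10)) (term_pos hu hv _ (by norm_num) 10 9)) (term_pos hu hv _ (by norm_num) 11 8)) (term_pos hu hv _ (by norm_num) 12 7)) (term_pos hu hv _ (by norm_num) 13 6)) (term_pos hu hv _ (by norm_num) 14 5)) (term_pos hu hv _ (by norm_num) 15 4)) (term_pos hu hv _ (by norm_num) 16 3)) (term_pos hu hv _ (by norm_num) 17 2)) (term_pos hu hv _ (by norm_num)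 18 1)) (term_pos hu hv _ (by norm_num) 19 0))
  -- abbreviations
  have hw0 : 0 ≤ ω t := Real.sqrt_nonneg _
  have hw2 : (ω t)^2 = 3*(506+75*t-t^3) := Real.sq_sqrt (by linarith only [hW2])
  set w := ω t with hwdef
  have hp6' : 0 < p6 t := by unfold p6; linarith only [hp6]
  have hp12' : 0 ≤ p12 t := by unfold p12; linarith only [hp12]
  -- q5 negative
  have hq5 : q5 t < 0 := by
    have hq5e : q5 t = -((11-t)^2*(-13-t)^5*((-1763) + 75*t + 111*t^2 + 1*t^3)) := by unfold q5; ring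
    rw [hq5e]
    have := mul_pos (mul_pos (pow_pos h11 2) (pow_pos hv 5)) hr3
    linarith only [this]
  -- inner nonneg
  have hin : _root_.inner t = 3*(11-t)*(p12 t + w*(-(2*p10 t))) := by
    rw [hwdef]; unfold _root_.inner; ring
  have hkey : 0 ≤ p12 t + w*(-(2*p10 t)) := by
    apply aux_nonneg _ _ _ hp12'
    have e2 : (p12 t)^2 - (w*(-(2*p10 t)))^2
        = (-13-t)*((-568) + (-12)*t + 15*t^2 + (-1)*t^3)*((t+13)^4*((-488351) + (-449946)*t + 66639*t^2 + 27476*t^3 + (-657)*t^4 + 102*t^5 + 1*t^6))^2 := by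
      unfold p12 p10
      linear_combination (-4*(122595778519 + 52782140344*t + 8848501713*t^2 + 1458683184*t^3 + 201606006*t^4 + 6367392*t^5 + (-2103342)*t^6 + (-42288)*t^7 + 68355*t^8 + (-2648)*t^9 + 13*t^10)^2)*hw2
    have h3 : (0:ℝ) ≤ (-13-t)*((-568) + (-12)*t + 15*t^2 + (-1)*t^3)*((t+13)^4*((-488351) + (-449946)*t + 66639*t^2 + 27476*t^3 + (-657)*t^4 + 102*t^5 + 1*t^6))^2 :=
      mul_nonneg (mul_nonneg hv.le (by linarith only [hmc3])) (sq_nonneg _)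
    have h4 : 0 ≤ (p12 t)^2 - (w*(-(2*p10 t)))^2 := by rw [e2]; exact h3
    exact sub_nonneg.mp h4
  have hinner : 0 ≤ _root_.inner t := by
    rw [hin]
    exact mul_nonneg (by linarith only [h11]) hkey
  -- sqrt of inner
  have hs2 : (Real.sqrt (_root_.inner t))^2 = _root_.inner t := Real.sq_sqrt hinner
  set s := Real.sqrt (_root_.inner t) with hsdef
  have hs0 : 0 ≤ s := Real.sqrt_nonneg _
  -- A < 0
  have hZ0 : 0 ≤ w*(16*(1+t)^2*p6 t) :=
    mul_nonneg hw0 (mul_nonneg (by positivity) hp6'.le)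
  have hAneg : (t-11)*p9 t - 16*w*(1+t)^2*p6 t < 0 := by
    have e2 : (w*(16*(1+t)^2*p6 t))^2 - ((t-11)*p9 t)^2 = (-13-t)^5*(18104467756638373 + 1367710885365399*t + (-1487349267530811)*t^2 + (-138363596662057)*t^3 + 20218769211897*t^4 + 470867853171*t^5 + (-512774746487)*t^6 + (-3098198781)*t^7 + 11823053103*t^8 + (-393798395)*t^9 + (-73106577)*t^10 + (-4762779)*t^11 + 859763*t^12 + (-3663)*t^13 + 3*t^14 + 1*t^15) := by
      have e1 : (w*(16*(1+t)^2*p6 t))^2 = (3*(506+75*t-t^3))*(16*(1+t)^2*p6 t)^2 := by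
        rw [mul_pow, hw2]
      rw [e1]; unfold p6 p9; ring
    have h4 : 0 < (w*(16*(1+t)^2*p6 t))^2 - ((t-11)*p9 t)^2 := by
      rw [e2]; exact mul_pos (pow_pos hv 5) hM15
    have h5 : (t-11)*p9 t < w*(16*(1+t)^2*p6 t) := sq_lt_aux hZ0 (sub_pos.mp h4)
    have e6 : (t-11)*p9 t - 16*w*(1+t)^2*p6 t = (t-11)*p9 t - w*(16*(1+t)^2*p6 t) := by
      ring
    rw [e6]; linarith only [h5]
  -- A - q5 > 0 with margin
  have hAq0 : 0 < (t-11)*p9 t - q5 t := by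
    have e : (t-11)*p9 t - q5 t = (-2836474344) + (-6403145400)*t + (-4341762720)*t^2 + (-820436832)*t^3 + (-44936496)*t^4 + 1316592*t^5 + 960480*t^6 + 55584*t^7 + 2520*t^8 + (-504)*t^9 := by unfold p9 q5; ring
    rw [e]; exact hAq
  have hAq5 : 0 < (t-11)*p9 t - q5 t + w*(-(16*(1+t)^2*p6 t)) := by
    apply aux_pos _ _ _ hAq0
    have e2 : ((t-11)*p9 t - q5 t)^2 - (w*(-(16*(1+t)^2*p6 t)))^2
        = ((-13-t)*(-1-t))^5*((-2022704173248) + 569638725120*t + 87388982784*t^2 + (-27789320448)*t^3 + 473551488*t^4 + 30364416*t^5 + 24339456*t^6 + (-2439936)*t^7 + 60480*t^8 + 768*t^9) := by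
      have e1 : (w*(-(16*(1+t)^2*p6 t)))^2 = (3*(506+75*t-t^3))*(16*(1+t)^2*p6 t)^2 := by
        rw [mul_pow, hw2]; ring
      rw [e1]; unfold p9 p6 q5; ring
    have h4 : 0 < ((t-11)*p9 t - q5 t)^2 - (w*(-(16*(1+t)^2*p6 t)))^2 := by
      rw [e2]; exact mul_pos (pow_pos (mul_pos hv hr) 5) hM9
    exact sub_pos.mp h4
  -- Up + w Vp > 0
  have hUpVp : 0 < (13405712552026622784 + 60744269424490698816*t + 110048949839185410240*t^2 + 100870818071473865664*t^3 + 48663304736583142656*t^4 + 11592969257507496192*t^5 + 1041084784119193344*t^6 + (-69840252974032128)*t^7 + (-22702212326473344)*t^8 + (-1999891241359488)*t^9 + (-140775845440896)*t^10 + (-4555576791936)*t^11 + 3534631540992*t^12 + 397830216960*t^13 + (-9899193600)*t^14 + (-2999994624)*t^15 + 34917696*t^16 + (-146880)*t^17 + 232128*t^18 + (-576)*t^19) + w*((-344331813854852736) + (-1535319869871950976)*t + (-2716800027479688192)*t^2 + (-2400088888325710848)*t^3 + (-1086807163225357824)*t^4 + (-228697701703398912)*t^5 + (-14540318364355584)*t^6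 + 2033027566973952*t^7 + 421472898437376*t^8 + 10475570724096*t^9 + (-5391683337216)*t^10 + (-233257638912)*t^11 + 56006177280*t^12 + 3972094464*t^13 + (-350745600)*t^14 + (-5452800)*t^15 + (-626304)*t^16 + 11136*t^17) := by
    apply aux_pos _ _ _ hUp
    have e2 : (13405712552026622784 + 60744269424490698816*t + 110048949839185410240*t^2 + 100870818071473865664*t^3 + 48663304736583142656*t^4 + 11592969257507496192*t^5 + 1041084784119193344*t^6 + (-69840252974032128)*t^7 + (-22702212326473344)*t^8 + (-1999891241359488)*t^9 + (-140775845440896)*t^10 + (-4555576791936)*t^11 + 3534631540992*t^12 + 397830216960*t^13 + (-9899193600)*t^14 + (-2999994624)*t^15 + 34917696*t^16 + (-146880)*t^17 + 232128*t^18 + (-576)*t^19)^2 - (w*((-344331813854852736) + (-1535319869871950976)*t + (-2716800027479688192)*t^2 + (-2400088888325710848)*t^3 + (-1086807163225357824)*t^4 + (-228697701703398912)*t^5 + (-14540318364355584)*t^6 + 2033027566973952*t^7 + 421472898437376*t^8 + 10475570724096*t^9 + (-5391683337216)*t^10 + (-233257638912)*t^11 + 56006177280*t^12 + 3972094464*t^13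 + (-350745600)*t^14 + (-5452800)*t^15 + (-626304)*t^16 + 11136*t^17))^2
        = 110592*(11-t)^5*(-1-t)^11*(-13-t)^10*((-1763) + 75*t + 111*t^2 + 1*t^3)^2*(35067511 + 5422118*t + 199093*t^2 + (-14108)*t^3 + 1265*t^4 + 22*t^5 + 3*t^6) := by
      have e1 : (w*((-344331813854852736) + (-1535319869871950976)*t + (-2716800027479688192)*t^2 + (-2400088888325710848)*t^3 + (-1086807163225357824)*t^4 + (-228697701703398912)*t^5 + (-14540318364355584)*t^6 + 2033027566973952*t^7 + 421472898437376*t^8 + 10475570724096*t^9 + (-5391683337216)*t^10 + (-233257638912)*t^11 + 56006177280*t^12 + 3972094464*t^13 + (-350745600)*t^14 + (-5452800)*t^15 + (-626304)*t^16 + 11136*t^17))^2 = (3*(506+75*t-t^3))*((-344331813854852736) + (-1535319869871950976)*t + (-2716800027479688192)*t^2 + (-2400088888325710848)*t^3 + (-1086807163225357824)*t^4 + (-228697701703398912)*t^5 + (-14540318364355584)*t^6 + 2033027566973952*t^7 + 421472898437376*t^8 + 10475570724096*t^9 + (-5391683337216)*t^10 + (-233257638912)*t^11 + 56006177280*t^12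 + 3972094464*t^13 + (-350745600)*t^14 + (-5452800)*t^15 + (-626304)*t^16 + 11136*t^17)^2 := by rw [mul_pow, hw2]
      rw [e1]; ring
    have h4 : 0 < (13405712552026622784 + 60744269424490698816*t + 110048949839185410240*t^2 + 100870818071473865664*t^3 + 48663304736583142656*t^4 + 11592969257507496192*t^5 + 1041084784119193344*t^6 + (-69840252974032128)*t^7 + (-22702212326473344)*t^8 + (-1999891241359488)*t^9 + (-140775845440896)*t^10 + (-4555576791936)*t^11 + 3534631540992*t^12 + 397830216960*t^13 + (-9899193600)*t^14 + (-2999994624)*t^15 + 34917696*t^16 + (-146880)*t^17 + 232128*t^18 + (-576)*t^19)^2 - (w*((-344331813854852736) + (-1535319869871950976)*t + (-2716800027479688192)*t^2 + (-2400088888325710848)*t^3 + (-1086807163225357824)*t^4 + (-228697701703398912)*t^5 + (-14540318364355584)*t^6 + 2033027566973952*t^7 + 421472898437376*t^8 + 10475570724096*t^9 + (-5391683337216)*t^10 + (-233257638912)*t^11 + 56006177280*t^12 + 3972094464*t^13 + (-350745600)*t^14 + (-5452800)*t^15 + (-626304)*t^16 + 11136*t^17))^2 := by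
      rw [e2]
      exact mul_pos (mul_pos (mul_pos (mul_pos
        (mul_pos (by norm_num : (0:ℝ) < 110592) (pow_pos h11 5)) (pow_pos hr 11))
        (pow_pos hv 10)) (pow_pos hr3 2)) hm6
    exact sub_pos.mp h4
  have hident : ((t-11)*p9 t - q5 t + w*(-(16*(1+t)^2*p6 t)))^2
      - (8*(1+t)^2*(-13-t))^2*(3*(11-t)*(p12 t + w*(-(2*p10 t))))
      = (13405712552026622784 + 60744269424490698816*t + 110048949839185410240*t^2 + 100870818071473865664*t^3 + 48663304736583142656*t^4 + 11592969257507496192*t^5 + 1041084784119193344*t^6 + (-69840252974032128)*t^7 + (-22702212326473344)*t^8 + (-1999891241359488)*t^9 + (-140775845440896)*t^10 + (-4555576791936)*t^11 + 3534631540992*t^12 + 397830216960*t^13 + (-9899193600)*t^14 + (-2999994624)*t^15 + 34917696*t^16 + (-146880)*t^17 + 232128*t^18 + (-576)*t^19) + w*((-344331813854852736) + (-1535319869871950976)*t + (-2716800027479688192)*t^2 + (-2400088888325710848)*t^3 + (-1086807163225357824)*t^4 + (-228697701703398912)*t^5 + (-14540318364355584)*t^6 + 2033027566973952*t^7 + 421472898437376*t^8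 + 10475570724096*t^9 + (-5391683337216)*t^10 + (-233257638912)*t^11 + 56006177280*t^12 + 3972094464*t^13 + (-350745600)*t^14 + (-5452800)*t^15 + (-626304)*t^16 + 11136*t^17) := by
    unfold p9 p6 p10 p12 q5
    linear_combination (256*(1+t)^4*((-4757750) + (-991641)*t + 35097*t^2 + 1478*t^3 + (-84)*t^4 + (-93)*t^5 + 1*t^6)^2)*hw2
  have hNpq5 : 8*(1+t)^2*(-13-t)*s < (t-11)*p9 t - q5 t + w*(-(16*(1+t)^2*p6 t)) := by
    apply sq_lt_aux hAq5.le
    have e3 : (8*(1+t)^2*(-13-t)*s)^2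
        = (8*(1+t)^2*(-13-t))^2*(3*(11-t)*(p12 t + w*(-(2*p10 t)))) := by
      rw [mul_pow, hs2, hin]
    rw [e3]
    have h5 : 0 < ((t-11)*p9 t - q5 t + w*(-(16*(1+t)^2*p6 t)))^2
        - (8*(1+t)^2*(-13-t))^2*(3*(11-t)*(p12 t + w*(-(2*p10 t)))) := by
      rw [hident]; exact hUpVp
    exact sub_pos.mp h5
  -- U + w V ≥ 0
  have hUV : 0 ≤ (6736218875218155818737 + 3157806694072492194788*t + 158705238480230736910*t^2 + (-94332752346051441948)*t^3 + 11002307517181342893*t^4 + 9545861336337123792*t^5 + 663166313017341864*t^6 + (-221843482143707760)*t^7 + (-30452759291502030)*t^8 + 1589505070635128*t^9 + 405317981831188*t^10 + (-3418091850184)*t^11 + (-1944425540910)*t^12 + 30596907792*t^13 + 1861963944*t^14 + (-889854384)*t^15 + 80172381*t^16 + (-2847036)*t^17 + 116110*t^18 + (-1276)*t^19 + 1*t^20) + w*((-12403185906469324736) + (-30098917033158018144)*t + (-23087916216429842976)*t^2 + (-5286699844393558272)*t^3 + 327771867625061376*t^4 + 236175466452637056*t^5 + 10248421639648896*t^6 +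 (-3974152872896256)*t^7 + (-296983042694016)*t^8 + 39242251900352*t^9 + 2264479713600*t^10 + (-235659446016)*t^11 + (-3454453248)*t^12 + 1542276480*t^13 + (-174972288)*t^14 + 9895680*t^15 + (-336576)*t^16 + 9120*t^17 + (-32)*t^18) := by
    apply aux_nonneg _ _ _ hU.le
    have e2 : (6736218875218155818737 + 3157806694072492194788*t + 158705238480230736910*t^2 + (-94332752346051441948)*t^3 + 11002307517181342893*t^4 + 9545861336337123792*t^5 + 663166313017341864*t^6 + (-221843482143707760)*t^7 + (-30452759291502030)*t^8 + 1589505070635128*t^9 + 405317981831188*t^10 + (-3418091850184)*t^11 + (-1944425540910)*t^12 + 30596907792*t^13 + 1861963944*t^14 + (-889854384)*t^15 + 80172381*t^16 + (-2847036)*t^17 + 116110*t^18 + (-1276)*t^19 + 1*t^20)^2 - (w*((-12403185906469324736) + (-30098917033158018144)*t + (-23087916216429842976)*t^2 + (-5286699844393558272)*t^3 + 327771867625061376*t^4 + 236175466452637056*t^5 + 10248421639648896*t^6 + (-3974152872896256)*t^7 + (-296983042694016)*t^8 + 39242251900352*t^9 + 2264479713600*t^10 + (-235659446016)*t^11 +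 (-3454453248)*t^12 + 1542276480*t^13 + (-174972288)*t^14 + 9895680*t^15 + (-336576)*t^16 + 9120*t^17 + (-32)*t^18))^2
        = ((t-11)^4*(-13-t)^5*((-1235970967883) + (-540477048829)*t + (-30069596789)*t^2 + 23901956805*t^3 + 7614826674*t^4 + 1284657438*t^5 + 135252246*t^6 + 8603754*t^7 + 300297*t^8 + 16303*t^9 + 239*t^10 + 1*t^11))^2 := by
      have e1 : (w*((-12403185906469324736) + (-30098917033158018144)*t + (-23087916216429842976)*t^2 + (-5286699844393558272)*t^3 + 327771867625061376*t^4 + 236175466452637056*t^5 + 10248421639648896*t^6 + (-3974152872896256)*t^7 + (-296983042694016)*t^8 + 39242251900352*t^9 + 2264479713600*t^10 + (-235659446016)*t^11 + (-3454453248)*t^12 + 1542276480*t^13 + (-174972288)*t^14 + 9895680*t^15 + (-336576)*t^16 + 9120*t^17 + (-32)*t^18))^2 = (3*(506+75*t-t^3))*((-12403185906469324736) + (-30098917033158018144)*t + (-23087916216429842976)*t^2 + (-5286699844393558272)*t^3 + 327771867625061376*t^4 + 236175466452637056*t^5 + 10248421639648896*t^6 + (-3974152872896256)*t^7 + (-296983042694016)*t^8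 + 39242251900352*t^9 + 2264479713600*t^10 + (-235659446016)*t^11 + (-3454453248)*t^12 + 1542276480*t^13 + (-174972288)*t^14 + 9895680*t^15 + (-336576)*t^16 + 9120*t^17 + (-32)*t^18)^2 := by rw [mul_pow, hw2]
      rw [e1]; ring
    have h4 : 0 ≤ (6736218875218155818737 + 3157806694072492194788*t + 158705238480230736910*t^2 + (-94332752346051441948)*t^3 + 11002307517181342893*t^4 + 9545861336337123792*t^5 + 663166313017341864*t^6 + (-221843482143707760)*t^7 + (-30452759291502030)*t^8 + 1589505070635128*t^9 + 405317981831188*t^10 + (-3418091850184)*t^11 + (-1944425540910)*t^12 + 30596907792*t^13 + 1861963944*t^14 + (-889854384)*t^15 + 80172381*t^16 + (-2847036)*t^17 + 116110*t^18 + (-1276)*t^19 + 1*t^20)^2 - (w*((-12403185906469324736) + (-30098917033158018144)*t + (-23087916216429842976)*t^2 + (-5286699844393558272)*t^3 + 327771867625061376*t^4 + 236175466452637056*t^5 + 10248421639648896*t^6 + (-3974152872896256)*t^7 + (-296983042694016)*t^8 + 39242251900352*t^9 + 2264479713600*t^10 + (-235659446016)*t^11 + (-3454453248)*t^12 + 1542276480*t^13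 + (-174972288)*t^14 + 9895680*t^15 + (-336576)*t^16 + 9120*t^17 + (-32)*t^18))^2 := by
      rw [e2]; exact sq_nonneg _
    exact sub_nonneg.mp h4
  have hident2 : ((t-11)*p9 t - 16*w*(1+t)^2*p6 t)^2
      - (8*(1+t)^2*(-13-t))^2*(3*(11-t)*(p12 t + w*(-(2*p10 t))))
      = (6736218875218155818737 + 3157806694072492194788*t + 158705238480230736910*t^2 + (-94332752346051441948)*t^3 + 11002307517181342893*t^4 + 9545861336337123792*t^5 + 663166313017341864*t^6 + (-221843482143707760)*t^7 + (-30452759291502030)*t^8 + 1589505070635128*t^9 + 405317981831188*t^10 + (-3418091850184)*t^11 + (-1944425540910)*t^12 + 30596907792*t^13 + 1861963944*t^14 + (-889854384)*t^15 + 80172381*t^16 + (-2847036)*t^17 + 116110*t^18 + (-1276)*t^19 + 1*t^20) + w*((-12403185906469324736) + (-30098917033158018144)*t + (-23087916216429842976)*t^2 + (-5286699844393558272)*t^3 + 327771867625061376*t^4 + 236175466452637056*t^5 + 10248421639648896*t^6 + (-3974152872896256)*t^7 + (-296983042694016)*t^8 + 39242251900352*t^9 + 2264479713600*t^10 + (-235659446016)*t^11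 + (-3454453248)*t^12 + 1542276480*t^13 + (-174972288)*t^14 + 9895680*t^15 + (-336576)*t^16 + 9120*t^17 + (-32)*t^18) := by
    unfold p9 p6 p10 p12
    linear_combination (256*(1+t)^4*((-4757750) + (-991641)*t + 35097*t^2 + 1478*t^3 + (-84)*t^4 + (-93)*t^5 + 1*t^6)^2)*hw2
  have hNm : 8*(1+t)^2*(-13-t)*s ≤ -((t-11)*p9 t - 16*w*(1+t)^2*p6 t) := by
    apply sq_le_aux (by linarith only [hAneg])
    have e3 : (8*(1+t)^2*(-13-t)*s)^2
        = (8*(1+t)^2*(-13-t))^2*(3*(11-t)*(p12 t + w*(-(2*p10 t)))) := by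
      rw [mul_pow, hs2, hin]
    rw [e3]
    have e4 : (-((t-11)*p9 t - 16*w*(1+t)^2*p6 t))^2
        = ((t-11)*p9 t - 16*w*(1+t)^2*p6 t)^2 := by ring
    rw [e4]
    have h5 : 0 ≤ ((t-11)*p9 t - 16*w*(1+t)^2*p6 t)^2
        - (8*(1+t)^2*(-13-t))^2*(3*(11-t)*(p12 t + w*(-(2*p10 t)))) := by
      rw [hident2]; exact hUV
    exact sub_nonneg.mp h5
  -- numerators
  have hccs : 0 ≤ 8*(1+t)^2*(-13-t)*s := by positivity
  have hNpNum : (t-11)*p9 t - 16*w*(1+t)^2*p6 t + 8*(1+t)^2*(13+t)*s < 0 := by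
    have e : 8*(1+t)^2*(13+t)*s = -(8*(1+t)^2*(-13-t)*s) := by ring
    rw [e]; linarith only [hAneg, hccs]
  have hNpGt : q5 t < (t-11)*p9 t - 16*w*(1+t)^2*p6 t + 8*(1+t)^2*(13+t)*s := by
    have e : 8*(1+t)^2*(13+t)*s = -(8*(1+t)^2*(-13-t)*s) := by ring
    rw [e]
    have e2 : (t-11)*p9 t - q5 t + w*(-(16*(1+t)^2*p6 t))
        = (t-11)*p9 t - 16*w*(1+t)^2*p6 t - q5 t := by ring
    rw [e2] at hNpq5
    linarith only [hNpq5]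
  have hNmNum : (t-11)*p9 t - 16*w*(1+t)^2*p6 t - 8*(1+t)^2*(13+t)*s ≤ 0 := by
    have e : (t-11)*p9 t - 16*w*(1+t)^2*p6 t - 8*(1+t)^2*(13+t)*s
        = (t-11)*p9 t - 16*w*(1+t)^2*p6 t + 8*(1+t)^2*(-13-t)*s := by ring
    rw [e]; linarith only [hNm]
  have hNmGt : q5 t < (t-11)*p9 t - 16*w*(1+t)^2*p6 t - 8*(1+t)^2*(13+t)*s := by
    have e : (t-11)*p9 t - 16*w*(1+t)^2*p6 t - 8*(1+t)^2*(13+t)*s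
        = (t-11)*p9 t - 16*w*(1+t)^2*p6 t + 8*(1+t)^2*(-13-t)*s := by ring
    rw [e]
    have e2 : (t-11)*p9 t - q5 t + w*(-(16*(1+t)^2*p6 t))
        = (t-11)*p9 t - 16*w*(1+t)^2*p6 t - q5 t := by ring
    rw [e2] at hNpq5
    linarith only [hNpq5, hccs]
  -- outer values
  have hOP : outerPlus t = ((t-11)*p9 t - 16*w*(1+t)^2*p6 t + 8*(1+t)^2*(13+t)*s)/q5 t := by
    rw [hwdef, hsdef]; rfl
  have hOM : outerMinus t = ((t-11)*p9 t - 16*w*(1+t)^2*p6 t - 8*(1+t)^2*(13+t)*s)/q5 t := by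
    rw [hwdef, hsdef]; rfl
  have hOPpos : 0 < outerPlus t := by
    rw [hOP]; exact div_pos_of_neg_of_neg hNpNum hq5
  have hOMnn : 0 ≤ outerMinus t := by
    rw [hOM]; exact div_nonneg_of_nonpos hNmNum hq5.le
  have hOPlt1 : outerPlus t < 1 := by
    rw [hOP, div_lt_one_iff]
    exact Or.inr (Or.inr ⟨hq5, hNpGt⟩)
  have hOMlt1 : outerMinus t < 1 := by
    rw [hOM, div_lt_one_iff]
    exact Or.inr (Or.inr ⟨hq5, hNmGt⟩)
  refine ⟨hinner, hOPpos.le, hOMnn, ?_, ?_, Real.sqrt_nonneg _, ?_⟩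
  · unfold z2
    have h1 : Real.sqrt (outerPlus t) < 1 := by
      calc Real.sqrt (outerPlus t) < Real.sqrt 1 := Real.sqrt_lt_sqrt hOPpos.le hOPlt1
        _ = 1 := Real.sqrt_one
    linarith only [h1]
  · unfold z2
    have := Real.sqrt_pos.mpr hOPpos
    linarith only [this]
  · unfold z4
    calc Real.sqrt (outerMinus t) < Real.sqrt 1 := Real.sqrt_lt_sqrt hOMnn hOMlt1
      _ = 1 := Real.sqrt_one
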